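/- For Z in the Siegel upper half space ℍ₂ define y₀ = θ[(0,0),(1,1)](Z)⁴, y₁ = θ[(0,0),(0,1)](Z)⁴, y₂ = θ[(0,0),(0,0)](Z)⁴, y₃ = −θ[(1,0),(0,0)](Z)⁴ − θ[(0,0),(1,1)](Z)⁴, y₄ = −θ[(1,0),(0,1)](Z)⁴ − θ[(0,0),(1,1)](Z)⁴. Then for every Z ∈ ℍ₂ the quartic relation (y₀y₁ + y₀y₂ + y₁y₂ − y₃y₄)² = 4·y₀y₁y₂·(y₀ + y₁ + y₂ + y₃ + y₄) holds. -/

import Mathlib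

open Matrix Complex

/-- The Siegel upper half space of genus 2: symmetric complex 2×2 matrices with
positive definite imaginary part. -/
def SiegelH2 : Set (Matrix (Fin 2) (Fin 2) ℂ) :=
  {Z | Z.IsSymm ∧ (Matrix.of fun i j => (Z i j).im).PosDef}

/-- The summand of the theta series with characteristic `(a,b)`:
`exp(πi((g+a/2)ᵀ Z (g+a/2) + bᵀ(g+a/2)))`. -/
noncomputable def thetaTerm (a b : Fin 2 → ℤ) (Z : Matrix (Fin 2) (Fin 2) ℂ)
    (g : Fin 2 → ℤ) : ℂ :=
  Complex.exp (Real.pi * Complex.I *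
    ((∑ i, ∑ j, ((g i : ℂ) + (a i : ℂ) / 2) * Z i j * ((g j : ℂ) + (a j : ℂ) / 2)) +
      ∑ i, (b i : ℂ) * ((g i : ℂ) + (a i : ℂ) / 2)))

/-- The theta constant `θ[a,b](Z) = Σ_{g∈ℤ²} exp(πi((g+a/2)ᵀ Z (g+a/2) + bᵀ(g+a/2)))`. -/
noncomputable def theta (a b : Fin 2 → ℤ) (Z : Matrix (Fin 2) (Fin 2) ℂ) : ℂ :=
  ∑' g : Fin 2 → ℤ, thetaTerm a b Z g

/-- `y₀ = θ[(0,0),(1,1)]⁴`. -/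
noncomputable def yg (Z : Matrix (Fin 2) (Fin 2) ℂ) : Fin 5 → ℂ :=
  ![theta ![0, 0] ![1, 1] Z ^ 4,
    theta ![0, 0] ![0, 1] Z ^ 4,
    theta ![0, 0] ![0, 0] Z ^ 4,
    -theta ![1, 0] ![0, 0] Z ^ 4 - theta ![0, 0] ![1, 1] Z ^ 4,
    -theta ![1, 0] ![0, 1] Z ^ 4 - theta ![0, 0] ![1, 1] Z ^ 4]

/-- 1-D shifted Gaussian summability. -/
lemma summable_exp_shift (t c : ℝ) (ht : 0 < t) :
    Summable (fun n : ℤ => Real.exp (-t * ((n : ℝ) + c) ^ 2)) := by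
  have hT : 0 < t / (2 * Real.pi) := by positivity
  have h := (summable_pow_mul_jacobiTheta₂_term_bound 0 hT 0).mul_left (Real.exp (t * c ^ 2))
  refine h.of_nonneg_of_le (fun n => (Real.exp_nonneg _)) (fun n => ?_)
  simp only [pow_zero, one_mul]
  rw [← Real.exp_add, Real.exp_le_exp]
  have hpi : Real.pi * (t / (2 * Real.pi)) = t / 2 := by
    field_simp
  have h1 : -Real.pi * (t / (2 * Real.pi) * (n:ℝ) ^ 2 - 2 * 0 * |(n:ℤ)|) =
      -(t/2) * (n:ℝ)^2 := by
    push_cast; rw [mul_zero, zero_mul, sub_zero, neg_mul, neg_mul, ← mul_assoc, hpi]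
  rw [h1]
  nlinarith [mul_nonneg ht.le (sq_nonneg ((n:ℝ) + 2*c))]

/-- Gaussian-decay condition on `Z`. -/
def gd (Z : Matrix (Fin 2) (Fin 2) ℂ) : Prop :=
  ∃ ε > 0, ∀ v0 v1 : ℝ, ε * (v0 ^ 2 + v1 ^ 2) ≤
    (Z 0 0).im * v0 ^ 2 + ((Z 0 1).im + (Z 1 0).im) * v0 * v1 + (Z 1 1).im * v1 ^ 2

lemma norm_thetaTerm (a b : Fin 2 → ℤ) (Z : Matrix (Fin 2) (Fin 2) ℂ) (g : Fin 2 → ℤ) :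
    ‖thetaTerm a b Z g‖ =
      Real.exp (-Real.pi * ((Z 0 0).im * ((g 0 : ℝ) + (a 0 : ℝ)/2) ^ 2 +
        ((Z 0 1).im + (Z 1 0).im) * (((g 0 : ℝ) + (a 0 : ℝ)/2) * ((g 1 : ℝ) + (a 1 : ℝ)/2)) +
        (Z 1 1).im * ((g 1 : ℝ) + (a 1 : ℝ)/2) ^ 2)) := by
  rw [thetaTerm, Complex.norm_exp]
  congr 1
  have hv : ∀ (c : ℤ) (d : ℤ), ((c : ℂ) + (d : ℂ)/2) = (((c : ℝ) + (d : ℝ)/2 : ℝ) : ℂ) := by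
    intro c d; push_cast; ring
  simp only [Fin.sum_univ_two, hv]
  simp only [Complex.add_re, Complex.add_im, Complex.mul_re, Complex.mul_im,
    Complex.ofReal_re, Complex.ofReal_im, Complex.I_re, Complex.I_im, Complex.intCast_re,
    Complex.intCast_im]
  ring

lemma summable_norm_thetaTerm {Z : Matrix (Fin 2) (Fin 2) ℂ} (h : gd Z) (a b : Fin 2 → ℤ) :
    Summable (fun g : Fin 2 → ℤ => ‖thetaTerm a b Z g‖) := by
  obtain ⟨ε, hε, hq⟩ := h
  have hs := Summable.mul_of_nonneg
      (f := fun n : ℤ => Real.exp (-(Real.pi*ε) * ((n : ℝ) + (a 0 : ℝ)/2) ^ 2))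
      (g := fun n : ℤ => Real.exp (-(Real.pi*ε) * ((n : ℝ) + (a 1 : ℝ)/2) ^ 2))
      (summable_exp_shift _ _ (by positivity))
      (summable_exp_shift _ _ (by positivity))
      (fun n => Real.exp_nonneg _) (fun n => Real.exp_nonneg _)
  refine ((finTwoArrowEquiv ℤ).symm.summable_iff).mp
    (hs.of_nonneg_of_le (fun nm => norm_nonneg _) (fun nm => ?_))
  simp only [Function.comp_apply]
  have h2 : (finTwoArrowEquiv ℤ).symm nm = ![nm.1, nm.2] := rfl
  rw [h2, norm_thetaTerm, ← Real.exp_add]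
  rw [Real.exp_le_exp]
  have := hq ((nm.1 : ℝ) + (a 0 : ℝ)/2) ((nm.2 : ℝ) + (a 1 : ℝ)/2)
  simp only [Matrix.cons_val_zero, Matrix.cons_val_one, Matrix.head_cons]
  nlinarith [Real.pi_pos]

def ii (σ : Fin 2 × Fin 2) : Fin 2 → ℤ := ![(σ.1.val : ℤ), (σ.2.val : ℤ)]

def pr (n : ℤ) : Fin 2 := if n % 2 = 0 then 0 else 1

lemma pr_val (n : ℤ) : ((pr n).val : ℤ) = n % 2 := by
  unfold pr; split <;> rename_i h <;> simp <;> omega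

def E : ((Fin 2 × Fin 2) × ((Fin 2 → ℤ) × (Fin 2 → ℤ))) ≃ ((Fin 2 → ℤ) × (Fin 2 → ℤ)) where
  toFun x := (x.2.1 + x.2.2 + ii x.1, x.2.1 - x.2.2)
  invFun y := ((pr (y.1 0 - y.2 0), pr (y.1 1 - y.2 1)),
    (fun i => (y.1 i + y.2 i - (y.1 i - y.2 i) % 2) / 2,
     fun i => (y.1 i - y.2 i - (y.1 i - y.2 i) % 2) / 2))
  left_inv := by
    rintro ⟨⟨σ1, σ2⟩, p, q⟩
    have h1 : ∀ i, (p + q + ii (σ1, σ2)) i - (p - q) i = 2 * q i + ii (σ1, σ2) i := by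
      intro i; simp [Pi.add_apply, Pi.sub_apply]; ring
    refine Prod.ext (Prod.ext ?_ ?_) (Prod.ext ?_ ?_)
    · show pr _ = σ1
      rw [h1 0]
      have : ii (σ1, σ2) 0 = (σ1.val : ℤ) := rfl
      rw [this]
      fin_cases σ1 <;> unfold pr <;>
        simp only [Fin.val_zero, Fin.val_one, Int.cast_zero, Int.cast_one] <;> split <;>
        rename_i h <;> first | rfl | (exfalso; omega)
    · show pr _ = σ2
      rw [h1 1]
      have : ii (σ1, σ2) 1 = (σ2.val : ℤ) := rfl
      rw [this]
      fin_cases σ2 <;> unfold pr <;>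
        simp only [Fin.val_zero, Fin.val_one, Int.cast_zero, Int.cast_one] <;> split <;>
        rename_i h <;> first | rfl | (exfalso; omega)
    · funext i
      show ((p + q + ii (σ1, σ2)) i + (p - q) i - ((p + q + ii (σ1, σ2)) i - (p - q) i) % 2) / 2 = p i
      have h2 : ii (σ1, σ2) i = 0 ∨ ii (σ1, σ2) i = 1 := by
        fin_cases i
        · fin_cases σ1 <;> simp [ii]
        · fin_cases σ2 <;> simp [ii]
      simp only [Pi.add_apply, Pi.sub_apply]
      rcases h2 with h | h <;> rw [h] <;> omega
    · funext i
      show ((p + q + ii (σ1, σ2)) i - (p - q) i - ((p + q + ii (σ1, σ2)) i - (p - q) i) % 2) / 2 = q i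
      have h2 : ii (σ1, σ2) i = 0 ∨ ii (σ1, σ2) i = 1 := by
        fin_cases i
        · fin_cases σ1 <;> simp [ii]
        · fin_cases σ2 <;> simp [ii]
      simp only [Pi.add_apply, Pi.sub_apply]
      rcases h2 with h | h <;> rw [h] <;> omega
  right_inv := by
    rintro ⟨g, h⟩
    refine Prod.ext ?_ ?_ <;> funext i <;> revert i <;> rw [Fin.forall_fin_two] <;>
      constructor <;>
      simp only [Pi.add_apply, Pi.sub_apply, ii, Matrix.cons_val_zero, Matrix.cons_val_one,
        Matrix.head_cons, pr_val] <;> omega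

lemma exp_eq_exp_of_sub_int (X Y : ℂ) (k : ℤ) (h : X = Y + k * (2 * Real.pi * Complex.I)) :
    Complex.exp X = Complex.exp Y := by
  rw [h, Complex.exp_add, Complex.exp_int_mul_two_pi_mul_I, mul_one]

lemma term_id {Z : Matrix (Fin 2) (Fin 2) ℂ} (hsym : Z 1 0 = Z 0 1) (a b s p q : Fin 2 → ℤ) :
    thetaTerm a b Z (p + q + s) * thetaTerm a b Z (p - q) =
      Complex.exp (Real.pi * Complex.I *
          (((s 0 : ℂ) + (a 0 : ℂ)) * (b 0 : ℂ) + ((s 1 : ℂ) + (a 1 : ℂ)) * (b 1 : ℂ))) *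
        (thetaTerm (s + a) ![0, 0] ((2 : ℂ) • Z) p * thetaTerm s ![0, 0] ((2 : ℂ) • Z) q) := by
  unfold thetaTerm
  rw [← Complex.exp_add, ← Complex.exp_add, ← Complex.exp_add]
  apply exp_eq_exp_of_sub_int _ _ (b 0 * p 0 + b 1 * p 1)
  simp only [Fin.sum_univ_two, Pi.add_apply, Pi.sub_apply, Matrix.smul_apply, smul_eq_mul,
    Matrix.cons_val_zero, Matrix.cons_val_one, Matrix.head_cons, Int.cast_add, Int.cast_sub,
    Int.cast_zero, Int.cast_mul]
  rw [hsym]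
  ring

lemma summable_pair {Z : Matrix (Fin 2) (Fin 2) ℂ} (h : gd Z) (a b : Fin 2 → ℤ) :
    Summable (fun z : (Fin 2 → ℤ) × (Fin 2 → ℤ) => thetaTerm a b Z z.1 * thetaTerm a b Z z.2) :=
  summable_mul_of_summable_norm (summable_norm_thetaTerm h a b) (summable_norm_thetaTerm h a b)

lemma gd_smul {Z : Matrix (Fin 2) (Fin 2) ℂ} (h : gd Z) : gd ((2 : ℂ) • Z) := by
  obtain ⟨ε, hε, hq⟩ := h
  refine ⟨2 * ε, by positivity, fun v0 v1 => ?_⟩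
  simp only [Matrix.smul_apply, smul_eq_mul]
  have h2 : ∀ w : ℂ, ((2 : ℂ) * w).im = 2 * w.im := by intro w; simp
  rw [h2, h2, h2, h2]
  have := hq v0 v1
  nlinarith

lemma theta_mul_self {Z : Matrix (Fin 2) (Fin 2) ℂ} (hsym : Z 1 0 = Z 0 1) (h : gd Z)
    (a b : Fin 2 → ℤ) :
    theta a b Z * theta a b Z = ∑ σ : Fin 2 × Fin 2,
      Complex.exp (Real.pi * Complex.I *
          (((ii σ 0 : ℂ) + (a 0 : ℂ)) * (b 0 : ℂ) + ((ii σ 1 : ℂ) + (a 1 : ℂ)) * (b 1 : ℂ))) *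
        (theta (ii σ + a) ![0, 0] ((2 : ℂ) • Z) * theta (ii σ) ![0, 0] ((2 : ℂ) • Z)) := by
  have h2 := gd_smul h
  rw [theta, tsum_mul_tsum_of_summable_norm (summable_norm_thetaTerm h a b)
    (summable_norm_thetaTerm h a b)]
  have hS := summable_pair h a b
  have hS' : Summable (fun x : (Fin 2 × Fin 2) × ((Fin 2 → ℤ) × (Fin 2 → ℤ)) =>
      thetaTerm a b Z (E x).1 * thetaTerm a b Z (E x).2) := E.summable_iff.mpr hS
  rw [← E.tsum_eq (fun z => thetaTerm a b Z z.1 * thetaTerm a b Z z.2)]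
  rw [Summable.tsum_prod' hS' (fun σ => hS'.prod_factor σ)]
  rw [tsum_fintype]
  refine Finset.sum_congr rfl (fun σ _ => ?_)
  have hterm : ∀ pq : (Fin 2 → ℤ) × (Fin 2 → ℤ),
      thetaTerm a b Z (E (σ, pq)).1 * thetaTerm a b Z (E (σ, pq)).2 =
      Complex.exp (Real.pi * Complex.I *
          (((ii σ 0 : ℂ) + (a 0 : ℂ)) * (b 0 : ℂ) + ((ii σ 1 : ℂ) + (a 1 : ℂ)) * (b 1 : ℂ))) *
        (thetaTerm (ii σ + a) ![0, 0] ((2 : ℂ) • Z) pq.1 *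
         thetaTerm (ii σ) ![0, 0] ((2 : ℂ) • Z) pq.2) := by
    intro pq
    exact term_id hsym a b (ii σ) pq.1 pq.2
  rw [tsum_congr hterm, tsum_mul_left, theta, theta,
    tsum_mul_tsum_of_summable_norm (summable_norm_thetaTerm h2 _ _)
      (summable_norm_thetaTerm h2 _ _)]

lemma gd_of_mem {Z : Matrix (Fin 2) (Fin 2) ℂ} (hZ : Z ∈ SiegelH2) : gd Z := by
  obtain ⟨hsym, hpos⟩ := hZ
  have hβ : (Z 1 0).im = (Z 0 1).im := by rw [hsym.apply 0 1]
  set α := (Z 0 0).im with hα'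
  set β := (Z 0 1).im with hβ'
  set γ := (Z 1 1).im with hγ'
  have happ : ∀ x : Fin 2 → ℝ, x ≠ 0 →
      0 < x 0 * (α * x 0 + β * x 1) + x 1 * (β * x 0 + γ * x 1) := by
    intro x hx
    have := hpos.dotProduct_mulVec_pos hx
    simpa [dotProduct, mulVec, Fin.sum_univ_two, hβ, mul_comm] using this
  have hα : 0 < α := by
    have := happ ![1, 0] (by intro h; have := congrFun h 0; simp at this)
    simpa using this
  have hγ : 0 < γ := by
    have := happ ![0, 1] (by intro h; have := congrFun h 1; simp at this)
    simpa using this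
  have hd : 0 < α * γ - β * β := by
    have := happ ![β, -α] (by
      intro h; have h1 := congrFun h 1; simp at h1; linarith)
    simp only [Matrix.cons_val_zero, Matrix.cons_val_one, Matrix.head_cons] at this
    nlinarith
  refine ⟨(α * γ - β * β) / (α + γ), by positivity, fun v0 v1 => ?_⟩
  rw [div_mul_eq_mul_div, div_le_iff₀ (by positivity)]
  rw [hβ, ← hα', ← hγ', ← hβ']
  nlinarith [sq_nonneg (α * v0 + β * v1), sq_nonneg (β * v0 + γ * v1)]

lemma theta_shift (c k : Fin 2 → ℤ) (W : Matrix (Fin 2) (Fin 2) ℂ) :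
    theta (c + k + k) ![0, 0] W = theta c ![0, 0] W := by
  rw [theta, theta, ← (Equiv.addRight k).tsum_eq (thetaTerm c ![0, 0] W)]
  refine tsum_congr fun g => ?_
  unfold thetaTerm
  congr 1
  simp only [Fin.sum_univ_two, Pi.add_apply, Equiv.coe_addRight, Matrix.cons_val_zero,
    Matrix.cons_val_one, Matrix.head_cons, Int.cast_add, Int.cast_zero]
  ring

lemma ii00 : ii (0, 0) = ![0, 0] := by funext i; fin_cases i <;> simp [ii]
lemma ii01 : ii (0, 1) = ![0, 1] := by funext i; fin_cases i <;> simp [ii]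
lemma ii10 : ii (1, 0) = ![1, 0] := by funext i; fin_cases i <;> simp [ii]
lemma ii11 : ii (1, 1) = ![1, 1] := by funext i; fin_cases i <;> simp [ii]

lemma exp_pi_I_two : Complex.exp (↑Real.pi * Complex.I * 2) = 1 := by
  rw [show (↑Real.pi * Complex.I * 2 : ℂ) = (1 : ℤ) * (2 * ↑Real.pi * Complex.I) by push_cast; ring]
  exact Complex.exp_int_mul_two_pi_mul_I 1

lemma exp_pi_I_one : Complex.exp (↑Real.pi * Complex.I * 1) = -1 := by
  rw [mul_one]; exact Complex.exp_pi_mul_I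

lemma exp_pi_I_three : Complex.exp (↑Real.pi * Complex.I * 3) = -1 := by
  rw [show (↑Real.pi * Complex.I * 3 : ℂ) = ↑Real.pi * Complex.I * 2 + ↑Real.pi * Complex.I * 1 by ring,
    Complex.exp_add, exp_pi_I_two, exp_pi_I_one, one_mul]

/-- Igusa's quartic relation
`(y₀y₁+y₀y₂+y₁y₂−y₃y₄)² = 4y₀y₁y₂(y₀+y₁+y₂+y₃+y₄)` among the five weight-two
generators `y₀,…,y₄` holds at every `Z ∈ ℍ₂`. -/
theorem stmt_10 (Z : Matrix (Fin 2) (Fin 2) ℂ) (hZ : Z ∈ SiegelH2) :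
    (yg Z 0 * yg Z 1 + yg Z 0 * yg Z 2 + yg Z 1 * yg Z 2 - yg Z 3 * yg Z 4) ^ 2 =
      4 * (yg Z 0 * yg Z 1 * yg Z 2) * (yg Z 0 + yg Z 1 + yg Z 2 + yg Z 3 + yg Z 4) := by
  have hsym : Z 1 0 = Z 0 1 := hZ.1.apply 0 1
  have hgd : gd Z := gd_of_mem hZ
  have s1 : theta ![2,0] ![0,0] ((2:ℂ)•Z) = theta ![0,0] ![0,0] ((2:ℂ)•Z) := by
    have := theta_shift ![0,0] ![1,0] ((2:ℂ)•Z)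
    simpa [Matrix.vec2_add] using this
  have s2 : theta ![2,1] ![0,0] ((2:ℂ)•Z) = theta ![0,1] ![0,0] ((2:ℂ)•Z) := by
    have := theta_shift ![0,1] ![1,0] ((2:ℂ)•Z)
    simpa [Matrix.vec2_add] using this
  have h0 : theta ![0,0] ![1,1] Z * theta ![0,0] ![1,1] Z =
      theta ![0,0] ![0,0] ((2:ℂ)•Z) * theta ![0,0] ![0,0] ((2:ℂ)•Z) -
      theta ![0,1] ![0,0] ((2:ℂ)•Z) * theta ![0,1] ![0,0] ((2:ℂ)•Z) -
      theta ![1,0] ![0,0] ((2:ℂ)•Z) * theta ![1,0] ![0,0] ((2:ℂ)•Z) +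
      theta ![1,1] ![0,0] ((2:ℂ)•Z) * theta ![1,1] ![0,0] ((2:ℂ)•Z) := by
    have H := theta_mul_self hsym hgd ![0,0] ![1,1]
    rw [Fintype.sum_prod_type, Fin.sum_univ_two, Fin.sum_univ_two, Fin.sum_univ_two,
      ii00, ii01, ii10, ii11] at H
    simp only [Matrix.cons_val_zero, Matrix.cons_val_one, Matrix.head_cons, Matrix.vec2_add] at H
    norm_num [exp_pi_I_one, exp_pi_I_two] at H
    rw [H]; ring
  have h1 : theta ![0,0] ![0,1] Z * theta ![0,0] ![0,1] Z =
      theta ![0,0] ![0,0] ((2:ℂ)•Z) * theta ![0,0] ![0,0] ((2:ℂ)•Z) -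
      theta ![0,1] ![0,0] ((2:ℂ)•Z) * theta ![0,1] ![0,0] ((2:ℂ)•Z) +
      theta ![1,0] ![0,0] ((2:ℂ)•Z) * theta ![1,0] ![0,0] ((2:ℂ)•Z) -
      theta ![1,1] ![0,0] ((2:ℂ)•Z) * theta ![1,1] ![0,0] ((2:ℂ)•Z) := by
    have H := theta_mul_self hsym hgd ![0,0] ![0,1]
    rw [Fintype.sum_prod_type, Fin.sum_univ_two, Fin.sum_univ_two, Fin.sum_univ_two,
      ii00, ii01, ii10, ii11] at H
    simp only [Matrix.cons_val_zero, Matrix.cons_val_one, Matrix.head_cons, Matrix.vec2_add] at H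
    norm_num [exp_pi_I_one, exp_pi_I_two] at H
    rw [H]; ring
  have h2 : theta ![0,0] ![0,0] Z * theta ![0,0] ![0,0] Z =
      theta ![0,0] ![0,0] ((2:ℂ)•Z) * theta ![0,0] ![0,0] ((2:ℂ)•Z) +
      theta ![0,1] ![0,0] ((2:ℂ)•Z) * theta ![0,1] ![0,0] ((2:ℂ)•Z) +
      theta ![1,0] ![0,0] ((2:ℂ)•Z) * theta ![1,0] ![0,0] ((2:ℂ)•Z) +
      theta ![1,1] ![0,0] ((2:ℂ)•Z) * theta ![1,1] ![0,0] ((2:ℂ)•Z) := by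
    have H := theta_mul_self hsym hgd ![0,0] ![0,0]
    rw [Fintype.sum_prod_type, Fin.sum_univ_two, Fin.sum_univ_two, Fin.sum_univ_two,
      ii00, ii01, ii10, ii11] at H
    simp only [Matrix.cons_val_zero, Matrix.cons_val_one, Matrix.head_cons, Matrix.vec2_add] at H
    norm_num at H
    rw [H]; ring
  have h3 : theta ![1,0] ![0,0] Z * theta ![1,0] ![0,0] Z =
      2 * (theta ![0,0] ![0,0] ((2:ℂ)•Z) * theta ![1,0] ![0,0] ((2:ℂ)•Z) +
           theta ![0,1] ![0,0] ((2:ℂ)•Z) * theta ![1,1] ![0,0] ((2:ℂ)•Z)) := by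
    have H := theta_mul_self hsym hgd ![1,0] ![0,0]
    rw [Fintype.sum_prod_type, Fin.sum_univ_two, Fin.sum_univ_two, Fin.sum_univ_two,
      ii00, ii01, ii10, ii11] at H
    simp only [Matrix.cons_val_zero, Matrix.cons_val_one, Matrix.head_cons, Matrix.vec2_add] at H
    norm_num at H
    rw [s1, s2] at H
    rw [H]; ring
  have h4 : theta ![1,0] ![0,1] Z * theta ![1,0] ![0,1] Z =
      2 * (theta ![0,0] ![0,0] ((2:ℂ)•Z) * theta ![1,0] ![0,0] ((2:ℂ)•Z) -
           theta ![0,1] ![0,0] ((2:ℂ)•Z) * theta ![1,1] ![0,0] ((2:ℂ)•Z)) := by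
    have H := theta_mul_self hsym hgd ![1,0] ![0,1]
    rw [Fintype.sum_prod_type, Fin.sum_univ_two, Fin.sum_univ_two, Fin.sum_univ_two,
      ii00, ii01, ii10, ii11] at H
    simp only [Matrix.cons_val_zero, Matrix.cons_val_one, Matrix.head_cons, Matrix.vec2_add] at H
    norm_num [exp_pi_I_one, exp_pi_I_two] at H
    rw [s1, s2] at H
    rw [H]; ring
  have p4 : ∀ t : ℂ, t ^ 4 = (t * t) * (t * t) := fun t => by ring
  simp only [yg, Matrix.cons_val_zero, Matrix.cons_val_one, Matrix.head_cons,
    Matrix.cons_val_two, Matrix.tail_cons, Matrix.cons_val_three, Matrix.cons_val_four]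
  simp only [p4]
  rw [h0, h1, h2, h3, h4]
  ring
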